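/- Let p ≥ 1, a₋₁ > 0, a₀ ≥ 0, a₁ ≥ 0, a₂ ≥ 0, b ≥ 0, δ ≥ 0, λ ≥ 0, γ > 1, ρ > 1, and suppose 2ρ ≤ γ + 1 and γ ≤ p + 1. Then there exists a constant K₃ > 0 such that for all y > 0: y^{−p} − p·y^{−p−1}·(a₋₁y^{−1} − a₀ + a₁y − a₂y^{γ}) + (b²/2)·p(p+1)·y^{−p−2+2ρ} + λ·((1+δ)^{−p} − 1)·y^{−p} ≤ K₃. -/
import Mathlib


/-- Key drift inequality for the boundedness of the negative moment `E[y(t)^{-p}]` of the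
solution of the generalized Ait-Sahalia model with Poisson jumps
`dy = (a₋₁ y⁻¹ - a₀ + a₁ y - a₂ y^γ)dt + b y^ρ dB + δ y dN` (jump intensity `lam = λ`):
under `2ρ ≤ γ + 1` and `γ ≤ p + 1`, the Lyapunov expression below is bounded above on
`(0, ∞)`. Here `am1` stands for `a₋₁`. -/
theorem ait_sahalia_negative_moment_drift_bound
    (p am1 a₀ a₁ a₂ b δ lam γ ρ : ℝ)
    (hp : 1 ≤ p)
    (ham1 : 0 < am1) (ha₀ : 0 ≤ a₀) (ha₁ : 0 ≤ a₁) (ha₂ : 0 ≤ a₂)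
    (hb : 0 ≤ b) (hδ : 0 ≤ δ) (hlam : 0 ≤ lam)
    (hγ : 1 < γ) (hρ : 1 < ρ)
    (hργ : 2 * ρ ≤ γ + 1) (hγp : γ ≤ p + 1) :
    ∃ K₃ : ℝ, 0 < K₃ ∧ ∀ y : ℝ, 0 < y →
      y ^ (-p) - p * y ^ (-p - 1) * (am1 * y⁻¹ - a₀ + a₁ * y - a₂ * y ^ γ)
        + (b ^ 2 / 2) * p * (p + 1) * y ^ (-p - 2 + 2 * ρ)
        + lam * ((1 + δ) ^ (-p) - 1) * y ^ (-p) ≤ K₃ := by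
  have hp0 : 0 < p := lt_of_lt_of_le one_pos hp
  set c : ℝ := (b ^ 2 / 2) * p * (p + 1) with hc
  have hc0 : 0 ≤ c := by positivity
  set S : ℝ := 1 + p * a₀ + p * a₂ + c with hS
  have hS0 : 0 < S := by positivity
  set α : ℝ := min (-p - 1) (-p - 2 + 2 * ρ) with hα
  -- exponent facts
  have hβ1 : α ≤ -p := le_trans (min_le_left _ _) (by linarith)
  have hβ2 : α ≤ -p - 1 := min_le_left _ _
  have hβ3 : α ≤ γ - p - 1 := le_trans (min_le_right _ _) (by linarith)
  have hβ4 : α ≤ -p - 2 + 2 * ρ := min_le_right _ _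
  have hβ1' : -p ≤ 0 := by linarith
  have hβ2' : -p - 1 ≤ 0 := by linarith
  have hβ3' : γ - p - 1 ≤ 0 := by linarith
  have hβ4' : -p - 2 + 2 * ρ ≤ 0 := by linarith
  have hα0 : α ≤ 0 := le_trans hβ2 hβ2'
  set e : ℝ := α + p + 2 with he
  have he0 : 0 < e := by
    rcases le_total (-p - 1) (-p - 2 + 2 * ρ) with h | h
    · have : α = -p - 1 := min_eq_left h
      rw [he, this]; linarith
    · have : α = -p - 2 + 2 * ρ := min_eq_right h
      rw [he, this]; linarith
  set r : ℝ := p * am1 / S with hr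
  have hr0 : 0 < r := by positivity
  set y₀ : ℝ := min 1 (r ^ (1 / e)) with hy₀
  have hy₀0 : 0 < y₀ := lt_min one_pos (Real.rpow_pos_of_pos hr0 _)
  have hy₀1 : y₀ ≤ 1 := min_le_left _ _
  refine ⟨S * y₀ ^ α, by positivity, fun y hy => ?_⟩
  -- step 1: reduce to the clean upper bound
  have h1 : y ^ (-p - 1) * y⁻¹ = y ^ (-p - 2) := by
    rw [← Real.rpow_neg_one y, ← Real.rpow_add hy]; ring_nf
  have h2 : y ^ (-p - 1) * y = y ^ (-p) := by
    have := Real.rpow_add_one hy.ne' (-p - 1)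
    rw [show (-p - 1 + 1) = -p by ring] at this
    rw [← this]
  have h3 : y ^ (-p - 1) * y ^ γ = y ^ (γ - p - 1) := by
    rw [← Real.rpow_add hy]; ring_nf
  have hLnp : lam * ((1 + δ) ^ (-p) - 1) * y ^ (-p) ≤ 0 := by
    have h1δ : (1 + δ : ℝ) ^ (-p) ≤ 1 :=
      Real.rpow_le_one_of_one_le_of_nonpos (by linarith) (by linarith)
    have : lam * ((1 + δ) ^ (-p) - 1) ≤ 0 :=
      mul_nonpos_of_nonneg_of_nonpos hlam (by linarith)
    exact mul_nonpos_of_nonpos_of_nonneg this (Real.rpow_nonneg hy.le _)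
  have ha1y : 0 ≤ p * a₁ * y ^ (-p) := by positivity
  have key : y ^ (-p) - p * y ^ (-p - 1) * (am1 * y⁻¹ - a₀ + a₁ * y - a₂ * y ^ γ)
        + c * y ^ (-p - 2 + 2 * ρ)
        + lam * ((1 + δ) ^ (-p) - 1) * y ^ (-p)
      ≤ y ^ (-p) + p * a₀ * y ^ (-p - 1) + p * a₂ * y ^ (γ - p - 1)
        + c * y ^ (-p - 2 + 2 * ρ) - p * am1 * y ^ (-p - 2) := by
    have expand : p * y ^ (-p - 1) * (am1 * y⁻¹ - a₀ + a₁ * y - a₂ * y ^ γ)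
        = p * am1 * y ^ (-p - 2) - p * a₀ * y ^ (-p - 1)
          + p * a₁ * y ^ (-p) - p * a₂ * y ^ (γ - p - 1) := by
      rw [← h1, ← h2, ← h3]; ring
    rw [expand]; linarith
  refine le_trans key ?_
  -- step 2: bound the clean expression
  rcases le_total y y₀ with hyy | hyy
  · -- small y: expression ≤ 0
    have hy1 : y ≤ 1 := le_trans hyy hy₀1
    have t1 : y ^ (-p) ≤ y ^ α := Real.rpow_le_rpow_of_exponent_ge hy hy1 hβ1
    have t2 : y ^ (-p - 1) ≤ y ^ α := Real.rpow_le_rpow_of_exponent_ge hy hy1 hβ2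
    have t3 : y ^ (γ - p - 1) ≤ y ^ α := Real.rpow_le_rpow_of_exponent_ge hy hy1 hβ3
    have t4 : y ^ (-p - 2 + 2 * ρ) ≤ y ^ α := Real.rpow_le_rpow_of_exponent_ge hy hy1 hβ4
    have hsum : y ^ (-p) + p * a₀ * y ^ (-p - 1) + p * a₂ * y ^ (γ - p - 1)
        + c * y ^ (-p - 2 + 2 * ρ) ≤ S * y ^ α := by
      have step : y ^ (-p) + p * a₀ * y ^ (-p - 1) + p * a₂ * y ^ (γ - p - 1)
          + c * y ^ (-p - 2 + 2 * ρ)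
          ≤ y ^ α + p * a₀ * y ^ α + p * a₂ * y ^ α + c * y ^ α :=
        add_le_add (add_le_add (add_le_add t1
          (mul_le_mul_of_nonneg_left t2 (by positivity)))
          (mul_le_mul_of_nonneg_left t3 (by positivity)))
          (mul_le_mul_of_nonneg_left t4 hc0)
      calc _ ≤ y ^ α + p * a₀ * y ^ α + p * a₂ * y ^ α + c * y ^ α := step
        _ = S * y ^ α := by rw [hS]; ring
    have hye : y ^ e ≤ r := by
      have hyr : y ≤ r ^ (1 / e) := le_trans hyy (min_le_right _ _)
      calc y ^ e ≤ (r ^ (1 / e)) ^ e := Real.rpow_le_rpow hy.le hyr he0.le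
        _ = r := by
          rw [← Real.rpow_mul hr0.le, one_div_mul_cancel he0.ne', Real.rpow_one]
    have hyα : y ^ α = y ^ e * y ^ (-p - 2) := by
      rw [← Real.rpow_add hy]; congr 1; rw [he]; ring
    have hbound : S * y ^ α ≤ p * am1 * y ^ (-p - 2) := by
      rw [hyα, ← mul_assoc]
      have h1' : S * y ^ e ≤ S * r := mul_le_mul_of_nonneg_left hye hS0.le
      have h2' : S * r = p * am1 := by rw [hr]; field_simp
      exact mul_le_mul_of_nonneg_right (by linarith) (Real.rpow_nonneg hy.le _)
    have : (0:ℝ) ≤ S * y₀ ^ α := by positivity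
    linarith
  · -- large y: each power term bounded by y₀ ^ α
    have b1 : y ^ (-p) ≤ y₀ ^ α :=
      le_trans (Real.rpow_le_rpow_of_nonpos hy₀0 hyy hβ1')
        (Real.rpow_le_rpow_of_exponent_ge hy₀0 hy₀1 hβ1)
    have b2 : y ^ (-p - 1) ≤ y₀ ^ α :=
      le_trans (Real.rpow_le_rpow_of_nonpos hy₀0 hyy hβ2')
        (Real.rpow_le_rpow_of_exponent_ge hy₀0 hy₀1 hβ2)
    have b3 : y ^ (γ - p - 1) ≤ y₀ ^ α :=
      le_trans (Real.rpow_le_rpow_of_nonpos hy₀0 hyy hβ3')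
        (Real.rpow_le_rpow_of_exponent_ge hy₀0 hy₀1 hβ3)
    have b4 : y ^ (-p - 2 + 2 * ρ) ≤ y₀ ^ α :=
      le_trans (Real.rpow_le_rpow_of_nonpos hy₀0 hyy hβ4')
        (Real.rpow_le_rpow_of_exponent_ge hy₀0 hy₀1 hβ4)
    have hneg : 0 ≤ p * am1 * y ^ (-p - 2) := by positivity
    have step : y ^ (-p) + p * a₀ * y ^ (-p - 1) + p * a₂ * y ^ (γ - p - 1)
        + c * y ^ (-p - 2 + 2 * ρ)
        ≤ y₀ ^ α + p * a₀ * y₀ ^ α + p * a₂ * y₀ ^ α + c * y₀ ^ α :=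
      add_le_add (add_le_add (add_le_add b1
        (mul_le_mul_of_nonneg_left b2 (by positivity)))
        (mul_le_mul_of_nonneg_left b3 (by positivity)))
        (mul_le_mul_of_nonneg_left b4 hc0)
    have hSeq : y₀ ^ α + p * a₀ * y₀ ^ α + p * a₂ * y₀ ^ α + c * y₀ ^ α
        = S * y₀ ^ α := by rw [hS]; ring
    linarith
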